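/- Let G be a (bull, house)-free graph in which X = {x1, ..., xℓ} induces a hole (ℓ ≥ 5, xi adjacent to x(i+1) mod ℓ), and suppose no vertex outside X is adjacent to all of X. If y is a vertex outside X adjacent to both xi and x(i+1), then the neighborhood of y in X equals {xi, x(i+1), x(i+2)} or {x(i-1), xi, x(i+1)} (indices mod ℓ). -/

import Mathlib

open SimpleGraph

/-- The bull: a triangle 0,1,2 with pendant edges 0–3 and 1–4. -/
def bull : SimpleGraph (Fin 5) :=
  SimpleGraph.fromEdgeSet {s(0,1), s(0,2), s(1,2), s(0,3), s(1,4)}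

/-- The house: the complement of the path on five vertices. -/
def house : SimpleGraph (Fin 5) := (SimpleGraph.pathGraph 5)ᶜ

/-- The domino: the 6-cycle 0,1,2,3,4,5 with the chord 2–5. -/
def domino : SimpleGraph (Fin 6) :=
  SimpleGraph.fromEdgeSet {s(0,1), s(1,2), s(2,3), s(3,4), s(4,5), s(5,0), s(2,5)}

/-- `F` does not occur as an induced subgraph of `G`. -/
def IsFree {α β : Type*} (F : SimpleGraph α) (G : SimpleGraph β) : Prop :=
  IsEmpty (F ↪g G)

/-- `H` is a homogeneous set of `G`. -/
def IsHomogeneousSet {V : Type*} [Fintype V] (G : SimpleGraph V) (H : Set V) : Prop :=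
  1 < H.ncard ∧ H.ncard < Fintype.card V ∧
    ∀ v ∉ H, (∀ h ∈ H, G.Adj v h) ∨ (∀ h ∈ H, ¬ G.Adj v h)

set_option maxHeartbeats 1600000 in
lemma no_bull {V : Type*} {G : SimpleGraph V} (hb : IsFree bull G) (a b c d e : V)
    (hab : G.Adj a b) (hac : G.Adj a c) (hbc : G.Adj b c) (had : G.Adj a d) (hbe : G.Adj b e)
    (hae : ¬G.Adj a e) (hbd : ¬G.Adj b d) (hcd : ¬G.Adj c d) (hce : ¬G.Adj c e)
    (hde : ¬G.Adj d e)
    (nae : a ≠ e) (nbd : b ≠ d) (ncd : c ≠ d) (nce : c ≠ e) (nde : d ≠ e) : False := by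
  have nab := hab.ne; have nac := hac.ne; have nbc := hbc.ne; have nad := had.ne
  have nbe := hbe.ne
  have hba := hab.symm; have hca := hac.symm; have hcb := hbc.symm; have hda := had.symm
  have heb := hbe.symm
  have hea : ¬G.Adj e a := fun h => hae h.symm
  have hdb : ¬G.Adj d b := fun h => hbd h.symm
  have hdc : ¬G.Adj d c := fun h => hcd h.symm
  have hec : ¬G.Adj e c := fun h => hce h.symm
  have hed : ¬G.Adj e d := fun h => hde h.symm
  refine hb.false (⟨⟨![a,b,c,d,e], ?_⟩, ?_⟩ : bull ↪g G)
  · intro x y h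
    fin_cases x <;> fin_cases y <;> simp_all
  · intro x y
    change G.Adj (![a,b,c,d,e] x) (![a,b,c,d,e] y) ↔ _
    fin_cases x <;> fin_cases y <;> simp_all [bull, Sym2.eq_iff] <;> decide

set_option maxHeartbeats 1600000 in
/-- A 5-cycle `a-b-c-d-e-a` together with the chord `a-c` forms a house. -/
lemma no_house {V : Type*} {G : SimpleGraph V} (hh : IsFree house G) (a b c d e : V)
    (hab : G.Adj a b) (hbc : G.Adj b c) (hcd : G.Adj c d) (hde : G.Adj d e)
    (hea : G.Adj e a) (hac : G.Adj a c)
    (had : ¬G.Adj a d) (hbd : ¬G.Adj b d) (hbe : ¬G.Adj b e) (hce : ¬G.Adj c e)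
    (nad : a ≠ d) (nbd : b ≠ d) (nbe : b ≠ e) (nce : c ≠ e) : False := by
  have nab := hab.ne; have nbc := hbc.ne; have ncd := hcd.ne; have nde := hde.ne
  have nea := hea.ne; have nac := hac.ne
  have hba := hab.symm; have hcb := hbc.symm; have hdc := hcd.symm; have hed := hde.symm
  have hae := hea.symm; have hca := hac.symm
  have hda : ¬G.Adj d a := fun h => had h.symm
  have hdb : ¬G.Adj d b := fun h => hbd h.symm
  have heb : ¬G.Adj e b := fun h => hbe h.symm
  have hec : ¬G.Adj e c := fun h => hce h.symm
  refine hh.false (⟨⟨![a,d,b,e,c], ?_⟩, ?_⟩ : house ↪g G)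
  · intro x y h
    fin_cases x <;> fin_cases y <;> simp_all
  · intro x y
    change G.Adj (![a,d,b,e,c] x) (![a,d,b,e,c] y) ↔ _
    fin_cases x <;> fin_cases y <;> simp_all [house, pathGraph_adj] <;> decide

theorem stmt6 {V : Type*} [Fintype V] (G : SimpleGraph V)
    (hbull : IsFree bull G) (hhouse : IsFree house G)
    (n : ℕ) (f : SimpleGraph.cycleGraph (n + 5) ↪g G)
    (hU : ∀ v ∉ Set.range f, ∃ x ∈ Set.range f, ¬ G.Adj v x)
    (y : V) (hy : y ∉ Set.range f) (i : Fin (n + 5))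
    (h1 : G.Adj y (f i)) (h2 : G.Adj y (f (i + 1))) :
    {x ∈ Set.range f | G.Adj y x} = {f i, f (i + 1), f (i + 2)} ∨
      {x ∈ Set.range f | G.Adj y x} = {f (i - 1), f i, f (i + 1)} := by
  open Fin.NatCast Fin.CommRing in
  classical
  have finj : Function.Injective f := f.injective
  have hyf : ∀ j : Fin (n+5), y ≠ f j := fun j h => hy ⟨j, h.symm⟩
  have adjf : ∀ a b : Fin (n+5), G.Adj (f a) (f b) ↔ a - b = 1 ∨ b - a = 1 :=
    fun a b => Iff.trans f.map_rel_iff (cycleGraph_adj (n := n+3))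
  have ezero : ∀ m : ℕ, 0 < m → m < n + 5 → ((m : ℕ) : Fin (n+5)) ≠ 0 := by
    intro m hm hmn h
    rw [Fin.natCast_eq_zero] at h
    have := Nat.le_of_dvd hm h
    omega
  have e1 : (1 : Fin (n+5)) ≠ 0 := by
    have := ezero 1 (by omega) (by omega); push_cast at this; exact this
  have e2 : (2 : Fin (n+5)) ≠ 0 := by
    have := ezero 2 (by omega) (by omega); push_cast at this; exact this
  have e3 : (3 : Fin (n+5)) ≠ 0 := by
    have := ezero 3 (by omega) (by omega); push_cast at this; exact this
  have e4 : (4 : Fin (n+5)) ≠ 0 := by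
    have := ezero 4 (by omega) (by omega); push_cast at this; exact this
  have castinj : ∀ p q : ℕ, p < n+5 → q < n+5 →
      ((p : ℕ) : Fin (n+5)) = ((q : ℕ) : Fin (n+5)) → p = q := by
    intro p q hp hq h
    have := congrArg Fin.val h
    rwa [Fin.val_natCast, Fin.val_natCast, Nat.mod_eq_of_lt hp, Nat.mod_eq_of_lt hq] at this
  have adjP : ∀ u v : Fin (n+5), u - v = 1 → G.Adj (f u) (f v) :=
    fun u v h => (adjf u v).mpr (Or.inl h)
  have nadj : ∀ u v c : Fin (n+5), c ≠ 1 → c + 1 ≠ 0 → u - v = c → ¬ G.Adj (f u) (f v) := by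
    intro u v c hc hc' hsub hadj
    rcases (adjf u v).mp hadj with h | h
    · exact hc (by rw [← hsub, h])
    · exact hc' (by linear_combination -hsub - h)
  have fne : ∀ u v c : Fin (n+5), c ≠ 0 → u - v = c → f u ≠ f v := by
    intro u v c hc hsub h
    exact hc (by rw [← hsub, finj h, sub_self])
  have ne21 : (2 : Fin (n+5)) ≠ 1 := fun h => e1 (by linear_combination h)
  have ne31 : (3 : Fin (n+5)) ≠ 1 := fun h => e2 (by linear_combination h)
  have nd2 : ∀ u v : Fin (n+5), u - v = 2 → ¬ G.Adj (f u) (f v) :=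
    fun u v h => nadj u v 2 ne21 (fun h' => e3 (by linear_combination h')) h
  have nd3 : ∀ u v : Fin (n+5), u - v = 3 → ¬ G.Adj (f u) (f v) :=
    fun u v h => nadj u v 3 ne31 (fun h' => e4 (by linear_combination h')) h
  have ns : ∀ u v : V, ¬ G.Adj u v → ¬ G.Adj v u := fun u v h h' => h h'.symm
  have jadj : ∀ a j : Fin (n+5), G.Adj (f j) (f a) → j = a + 1 ∨ j = a - 1 := by
    intro a j h
    rcases (adjf j a).mp h with h | h
    · exact Or.inl (by linear_combination h)
    · exact Or.inr (by linear_combination -h)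
  -- L1: bull forces the neighbourhood to extend
  have L1 : ∀ a : Fin (n+5), G.Adj y (f a) → G.Adj y (f (a+1)) → ¬G.Adj y (f (a-1)) →
      G.Adj y (f (a+2)) := by
    intro a ha ha1 hm
    by_contra hp
    exact no_bull hbull (f a) (f (a+1)) y (f (a-1)) (f (a+2))
      ((adjP (a+1) a (by ring)).symm) ha.symm ha1.symm
      (adjP a (a-1) (by ring)) ((adjP (a+2) (a+1) (by ring)).symm)
      (ns _ _ (nd2 (a+2) a (by ring))) (nd2 (a+1) (a-1) (by ring)) hm hp
      (ns _ _ (nd3 (a+2) (a-1) (by ring)))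
      ((fne (a+2) a 2 e2 (by ring)).symm) (fne (a+1) (a-1) 2 e2 (by ring))
      (hyf (a-1)) (hyf (a+2)) ((fne (a+2) (a-1) 3 e3 (by ring)).symm)
  -- L2: house kills a neighbour at distance 2 behind a gap
  have L2 : ∀ a : Fin (n+5), G.Adj y (f a) → G.Adj y (f (a+1)) → ¬G.Adj y (f (a-1)) →
      G.Adj y (f (a-2)) → False := by
    intro a ha ha1 hm h2'
    exact no_house hhouse y (f (a+1)) (f a) (f (a-1)) (f (a-2))
      ha1 (adjP (a+1) a (by ring)) (adjP a (a-1) (by ring)) (adjP (a-1) (a-2) (by ring))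
      h2'.symm ha
      hm (nd2 (a+1) (a-1) (by ring)) (nd3 (a+1) (a-2) (by ring)) (nd2 a (a-2) (by ring))
      (hyf (a-1)) (fne (a+1) (a-1) 2 e2 (by ring)) (fne (a+1) (a-2) 3 e3 (by ring))
      (fne a (a-2) 2 e2 (by ring))
  -- L3: bull kills any far neighbour
  have L3 : ∀ a j : Fin (n+5), G.Adj y (f a) → G.Adj y (f (a+1)) → ¬G.Adj y (f (a-1)) →
      G.Adj y (f j) → j ≠ a - 2 → j ≠ a - 1 → j ≠ a → j ≠ a + 1 → j ≠ a + 2 → False := by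
    intro a j ha ha1 hm hj hjm2 hjm1 hja hja1 hja2
    refine no_bull hbull (f a) y (f (a+1)) (f (a-1)) (f j)
      ha.symm ((adjP (a+1) a (by ring)).symm) ha1
      (adjP a (a-1) (by ring)) hj
      ?_ hm (nd2 (a+1) (a-1) (by ring)) ?_ ?_
      (fun h => hja (finj h).symm) (hyf (a-1)) (fne (a+1) (a-1) 2 e2 (by ring))
      (fun h => hja1 (finj h).symm) (fun h => hjm1 (finj h).symm)
    · intro h
      rcases jadj a j h.symm with h' | h'
      · exact hja1 h'
      · exact hjm1 h'
    · intro h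
      rcases jadj (a+1) j h.symm with h' | h'
      · exact hja2 (by linear_combination h')
      · exact hja (by linear_combination h')
    · intro h
      rcases jadj (a-1) j h.symm with h' | h'
      · exact hja (by linear_combination h')
      · exact hjm2 (by linear_combination h')
  -- KEY: a left-maximal pair of consecutive neighbours bounds the whole neighbourhood
  have KEY : ∀ a : Fin (n+5), G.Adj y (f a) → G.Adj y (f (a+1)) → ¬G.Adj y (f (a-1)) →
      ∀ j : Fin (n+5), G.Adj y (f j) → j = a ∨ j = a + 1 ∨ j = a + 2 := by
    intro a ha ha1 hm j hj
    by_cases hja : j = a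
    · exact Or.inl hja
    by_cases hja1 : j = a + 1
    · exact Or.inr (Or.inl hja1)
    by_cases hja2 : j = a + 2
    · exact Or.inr (Or.inr hja2)
    exfalso
    by_cases hjm1 : j = a - 1
    · rw [hjm1] at hj; exact hm hj
    by_cases hjm2 : j = a - 2
    · rw [hjm2] at hj; exact L2 a ha ha1 hm hj
    exact L3 a j ha ha1 hm hj hjm2 hjm1 hja hja1 hja2
  -- find the left end of the run of neighbours through i
  obtain ⟨x0, hx0, hnadj⟩ := hU y hy
  obtain ⟨j0, rfl⟩ := hx0
  have hex : ∃ u : ℕ, ¬ G.Adj y (f (i - (u : ℕ))) := by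
    refine ⟨(i - j0).val, ?_⟩
    rw [Fin.cast_val_eq_self, sub_sub_cancel]
    exact hnadj
  set u := Nat.find hex with hu_def
  have hu : ¬ G.Adj y (f (i - (u : ℕ))) := Nat.find_spec hex
  have humin : ∀ v : ℕ, v < u → G.Adj y (f (i - (v : ℕ))) :=
    fun v hv => not_not.mp (Nat.find_min hex hv)
  have hu1 : 1 ≤ u := by
    rcases Nat.eq_zero_or_pos u with h | h
    · exfalso
      rw [h] at hu
      apply hu
      simpa using h1
    · exact h
  have hule : u ≤ n + 4 := by
    have h' : ¬ G.Adj y (f (i - ((((i - j0).val : ℕ)) : Fin (n+5)))) := by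
      rw [Fin.cast_val_eq_self, sub_sub_cancel]; exact hnadj
    have := Nat.find_min' hex h'
    have hlt : (i - j0).val < n + 5 := (i - j0).is_lt
    omega
  set a : Fin (n+5) := i - ((u : ℕ) : Fin (n+5)) + 1 with ha_def
  have hAa : G.Adj y (f a) := by
    have h := humin (u - 1) (by omega)
    have heq : i - (((u - 1 : ℕ)) : Fin (n+5)) = a := by
      rw [Nat.cast_sub hu1, Nat.cast_one, ha_def]; ring
    rwa [heq] at h
  have hAa1 : G.Adj y (f (a + 1)) := by
    rcases eq_or_lt_of_le hu1 with h | h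
    · have heq : a + 1 = i + 1 := by
        rw [ha_def, ← h]; push_cast; ring
      rw [heq]; exact h2
    · have h' := humin (u - 2) (by omega)
      have heq : i - (((u - 2 : ℕ)) : Fin (n+5)) = a + 1 := by
        rw [Nat.cast_sub (by omega : 2 ≤ u), ha_def]; push_cast; ring
      rwa [heq] at h'
  have hm : ¬ G.Adj y (f (a - 1)) := by
    have heq : a - 1 = i - ((u : ℕ) : Fin (n+5)) := by rw [ha_def]; ring
    rw [heq]; exact hu
  have hAa2 : G.Adj y (f (a + 2)) := L1 a hAa hAa1 hm
  have HAchar : ∀ jj : Fin (n+5), G.Adj y (f jj) ↔ (jj = a ∨ jj = a + 1 ∨ jj = a + 2) := by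
    intro jj
    constructor
    · exact KEY a hAa hAa1 hm jj
    · rintro (rfl | rfl | rfl) <;> assumption
  have SET : {x ∈ Set.range f | G.Adj y x} = {f a, f (a+1), f (a+2)} := by
    ext x
    simp only [Set.mem_setOf_eq, Set.mem_range, Set.mem_insert_iff, Set.mem_singleton_iff]
    constructor
    · rintro ⟨⟨jj, rfl⟩, hadj⟩
      rcases (HAchar jj).mp hadj with rfl | rfl | rfl
      · exact Or.inl rfl
      · exact Or.inr (Or.inl rfl)
      · exact Or.inr (Or.inr rfl)
    · rintro (rfl | rfl | rfl)
      · exact ⟨⟨a, rfl⟩, hAa⟩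
      · exact ⟨⟨a + 1, rfl⟩, hAa1⟩
      · exact ⟨⟨a + 2, rfl⟩, hAa2⟩
  have hi1 := (HAchar (i + 1)).mp h2
  have hu12 : u = 1 ∨ u = 2 := by
    rcases hi1 with h | h | h
    · exfalso
      rw [ha_def] at h
      have hcast : ((u : ℕ) : Fin (n+5)) = ((0 : ℕ) : Fin (n+5)) := by
        push_cast; linear_combination h
      have := castinj u 0 (by omega) (by omega) hcast
      omega
    · left
      rw [ha_def] at h
      have hcast : ((u : ℕ) : Fin (n+5)) = ((1 : ℕ) : Fin (n+5)) := by
        push_cast; linear_combination h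
      exact castinj u 1 (by omega) (by omega) hcast
    · right
      rw [ha_def] at h
      have hcast : ((u : ℕ) : Fin (n+5)) = ((2 : ℕ) : Fin (n+5)) := by
        push_cast; linear_combination h
      exact castinj u 2 (by omega) (by omega) hcast
  rcases hu12 with hu' | hu'
  · left
    have haa : a = i := by rw [ha_def, hu']; push_cast; ring
    rw [haa] at SET
    exact SET
  · right
    have haa : a = i - 1 := by rw [ha_def, hu']; push_cast; ring
    rw [haa, show i - 1 + 1 = i from by ring, show i - 1 + 2 = i + 1 from by ring] at SET
    exact SET
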